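/- Let N ≥ 2. Suppose that on a neighbourhood of γ = 0 we are given maps γ ↦ x(γ) ∈ ℝ^N and γ ↦ λ(γ) ∈ ℝ such that x(·) is differentiable at 0, Σ_{i=1}^N x_i(γ) = 0 for all γ, and ∇V_γ(x(γ)) = λ(γ)·(1,…,1) for all γ (i.e., x(γ) is a family of stationary points of V_γ restricted to S). Then γ ↦ V_γ(x(γ)) is differentiable at γ = 0 with derivative (1/4) Σ_{i=1}^N (x_{i+1}(0) − x_i(0))² (indices cyclic). In particular V_γ(x(γ)) = V_0(x(0)) + (γ/4) Σ_{i=1}^N (x_{i+1}(0) − x_i(0))² + o(γ). -/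

import Mathlib

/-- The coupled potential `V_γ(x) = Σᵢ (xᵢ⁴/4 - xᵢ²/2) + (γ/4) Σᵢ (x_{i+1} - xᵢ)²`
on the periodic lattice of `N` sites. -/
noncomputable def Vg (N : ℕ) [NeZero N] (γ : ℝ) (x : Fin N → ℝ) : ℝ :=
  (∑ i, ((x i) ^ 4 / 4 - (x i) ^ 2 / 2)) + γ / 4 * ∑ i, (x (i + 1) - x i) ^ 2

/-- First-order expansion of the potential value along a differentiable
family of constrained stationary points: `γ ↦ V_γ(x(γ))` is differentiable at `γ = 0` with
derivative `(1/4) Σᵢ (x_{i+1}(0) - xᵢ(0))²`. -/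
theorem stmt_19 (N : ℕ) (hN : 2 ≤ N) [NeZero N]
    (x : ℝ → Fin N → ℝ) (lam : ℝ → ℝ) (δ : ℝ) (hδ : 0 < δ)
    (hdiff : DifferentiableAt ℝ x 0)
    (hsum : ∀ γ : ℝ, |γ| < δ → ∑ i, x γ i = 0)
    (hstat : ∀ γ : ℝ, |γ| < δ → ∀ i : Fin N,
      (x γ i) ^ 3 - x γ i - γ / 2 * (x γ (i + 1) - 2 * x γ i + x γ (i - 1)) = lam γ) :
    HasDerivAt (fun γ : ℝ => Vg N γ (x γ))
      (1 / 4 * ∑ i, (x 0 (i + 1) - x 0 i) ^ 2) 0 := by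
  set d : Fin N → ℝ := fun i => fderiv ℝ x 0 1 i with hd
  have hcomp : ∀ i : Fin N, HasDerivAt (fun γ => x γ i) (d i) 0 := by
    intro i
    have h := ((ContinuousLinearMap.proj (R := ℝ) (φ := fun _ : Fin N => ℝ) i).hasFDerivAt.comp
      0 hdiff.hasFDerivAt).hasDerivAt
    exact h
  -- sum of derivatives is zero
  have hsd : ∑ i, d i = 0 := by
    have h1 : HasDerivAt (fun γ => ∑ i, x γ i) (∑ i, d i) 0 :=
      HasDerivAt.fun_sum fun i _ => hcomp i
    have heq : (fun γ => ∑ i, x γ i) =ᶠ[nhds (0 : ℝ)] fun _ => (0 : ℝ) := by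
      filter_upwards [Metric.ball_mem_nhds (0 : ℝ) hδ] with γ hγ
      exact hsum γ (by simpa [Real.dist_eq] using hγ)
    have h2 : HasDerivAt (fun γ => ∑ i, x γ i) 0 0 :=
      (hasDerivAt_const (0 : ℝ) (0 : ℝ)).congr_of_eventuallyEq heq
    exact h1.unique h2
  have hA : HasDerivAt (fun γ => ∑ i, ((x γ i) ^ 4 / 4 - (x γ i) ^ 2 / 2))
      (∑ i, ((x 0 i) ^ 3 * d i - (x 0 i) * d i)) 0 := by
    apply HasDerivAt.fun_sum
    intro i _
    have h4 : HasDerivAt (fun γ => (x γ i) ^ 4 / 4) ((x 0 i) ^ 3 * d i) 0 := by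
      have := ((hcomp i).fun_pow 4).div_const 4
      exact this.congr_deriv (by ring)
    have h2 : HasDerivAt (fun γ => (x γ i) ^ 2 / 2) ((x 0 i) * d i) 0 := by
      have := ((hcomp i).fun_pow 2).div_const 2
      exact this.congr_deriv (by ring)
    exact h4.sub h2
  have hA0 : (∑ i, ((x 0 i) ^ 3 * d i - (x 0 i) * d i)) = 0 := by
    have : ∀ i : Fin N, (x 0 i) ^ 3 - x 0 i = lam 0 := by
      intro i
      have := hstat 0 (by simpa using hδ) i
      simpa using this
    calc (∑ i, ((x 0 i) ^ 3 * d i - (x 0 i) * d i))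
        = ∑ i, lam 0 * d i := by
          apply Finset.sum_congr rfl
          intro i _
          rw [← this i]; ring
      _ = lam 0 * ∑ i, d i := by rw [Finset.mul_sum]
      _ = 0 := by rw [hsd]; ring
  set B' : ℝ := ∑ i, 2 * (x 0 (i + 1) - x 0 i) * (d (i + 1) - d i) with hB'
  have hB : HasDerivAt (fun γ => ∑ i, (x γ (i + 1) - x γ i) ^ 2) B' 0 := by
    apply HasDerivAt.fun_sum
    intro i _
    have := ((hcomp (i + 1)).fun_sub (hcomp i)).fun_pow 2
    exact this.congr_deriv (by ring)
  have hg : HasDerivAt (fun γ : ℝ => γ / 4) (1 / 4 : ℝ) 0 := by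
    simpa using (hasDerivAt_id (0 : ℝ)).div_const 4
  have hprod : HasDerivAt (fun γ : ℝ => γ / 4 * ∑ i, (x γ (i + 1) - x γ i) ^ 2)
      (1 / 4 * ∑ i, (x 0 (i + 1) - x 0 i) ^ 2 + 0 / 4 * B') 0 := hg.mul hB
  have htot := hA.add hprod
  have : (∑ i, ((x 0 i) ^ 3 * d i - (x 0 i) * d i))
      + (1 / 4 * ∑ i, (x 0 (i + 1) - x 0 i) ^ 2 + 0 / 4 * B')
      = 1 / 4 * ∑ i, (x 0 (i + 1) - x 0 i) ^ 2 := by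
    rw [hA0]; ring
  rw [this] at htot
  simpa [Vg, Pi.add_def] using htot
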